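/- Let (A, ω) be a weighted K-algebra possessing an idempotent e (e·e = e, e ≠ 0) with ω(e) = 1, and let f ∈ K(T) be such that ρ̂(f) = 0 for every substitution ρ : T → H_ω. Assume that the cardinality of K∖{0} is strictly greater than the degree of f in each variable (where the degree of f in t_i is the maximal number of occurrences of t_i in a monomial of f). Then for every variable t_i and every y ∈ A with ω(y) = 0, (∂_i f)(L_e)(y) = 0, where L_e ∈ End_K(A) is the left-multiplication operator x ↦ e·x and (∂_i f)(L_e) is the evaluation of the polynomial ∂_i f ∈ K[X] at L_e (the constant term acting as a multiple of the identity). -/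

import Mathlib

namespace Evanescent

universe u v

variable {T : Type u}

/-- The commutativity relation on the free magma on `T`. -/
inductive CommRel (T : Type u) : FreeMagma T → FreeMagma T → Prop
  | comm (a b : FreeMagma T) : CommRel T (a * b) (b * a)
  | mul_left {a b : FreeMagma T} (c : FreeMagma T) :
      CommRel T a b → CommRel T (a * c) (b * c)
  | mul_right (c : FreeMagma T) {a b : FreeMagma T} :
      CommRel T a b → CommRel T (c * a) (c * b)

/-- The free commutative magma on `T`: the set of commutative nonassociative
monomials (words) in the variables `T`. -/
def FreeCommMagma (T : Type u) : Type u := Quot (CommRel T)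

namespace FreeCommMagma

instance : Mul (FreeCommMagma T) :=
  ⟨Quot.map₂ (· * ·) (fun a _ _ h => CommRel.mul_right a h)
    (fun _ _ b h => CommRel.mul_left b h)⟩

/-- The class of a nonassociative word in the free commutative magma. -/
def mk (w : FreeMagma T) : FreeCommMagma T := Quot.mk (CommRel T) w

/-- The generator of the free commutative magma corresponding to a variable. -/
def of (t : T) : FreeCommMagma T := mk (FreeMagma.of t)

@[simp] lemma mk_mul (a b : FreeMagma T) : mk a * mk b = mk (a * b) := rfl

protected lemma mul_comm (a b : FreeCommMagma T) : a * b = b * a := by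
  induction a using Quot.ind
  induction b using Quot.ind
  exact Quot.sound (CommRel.comm _ _)

instance : CommMagma (FreeCommMagma T) := ⟨FreeCommMagma.mul_comm⟩

end FreeCommMagma

section Peirce

variable (R : Type v) [Semiring R] [DecidableEq T]

/-- The Peirce polynomial of a (noncommutative) nonassociative word, with
coefficients in `R`. -/
noncomputable def peirceAux (i : T) : FreeMagma T → Polynomial R
  | .of j => if j = i then 1 else 0
  | .mul u v => Polynomial.X * (peirceAux i u + peirceAux i v)

@[simp] lemma peirceAux_mul (i : T) (u v : FreeMagma T) :
    peirceAux R i (u * v) = Polynomial.X * (peirceAux R i u + peirceAux R i v) := rfl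

@[simp] lemma peirceAux_of (i j : T) :
    peirceAux R i (FreeMagma.of j) = if j = i then 1 else 0 := rfl

/-- The number of occurrences of the variable `i` in a nonassociative word. -/
def countAux (i : T) : FreeMagma T → ℕ
  | .of j => if j = i then 1 else 0
  | .mul u v => countAux i u + countAux i v

@[simp] lemma countAux_mul (i : T) (u v : FreeMagma T) :
    countAux i (u * v) = countAux i u + countAux i v := rfl

lemma peirceAux_respects (i : T) {a b : FreeMagma T} (h : CommRel T a b) :
    peirceAux R i a = peirceAux R i b := by
  induction h with
  | comm a b => simp [add_comm]
  | mul_left c h ih => simp [ih]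
  | mul_right c h ih => simp [ih]

lemma countAux_respects (i : T) {a b : FreeMagma T} (h : CommRel T a b) :
    countAux i a = countAux i b := by
  induction h with
  | comm a b => simp [Nat.add_comm]
  | mul_left c h ih => simp [ih]
  | mul_right c h ih => simp [ih]

/-- The Peirce polynomial `∂ᵢ(w)` of a commutative nonassociative monomial `w`,
determined by `∂ᵢ(tᵢ) = 1`, `∂ᵢ(tⱼ) = 0` for `j ≠ i`, and
`∂ᵢ(u·v) = X·(∂ᵢ(u) + ∂ᵢ(v))`. -/
noncomputable def FreeCommMagma.peirce (i : T) : FreeCommMagma T → Polynomial R :=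
  Quot.lift (peirceAux R i) fun _ _ h => peirceAux_respects R i h

/-- The number of occurrences (degree) of the variable `i` in a commutative
nonassociative monomial. -/
def FreeCommMagma.count (i : T) : FreeCommMagma T → ℕ :=
  Quot.lift (countAux i) fun _ _ h => countAux_respects i h

end Peirce

/-- Principal powers of an element of a magma: `ppow a n = a^(n+1)`,
i.e. `ppow a 0 = a` and `ppow a (n+1) = a * (ppow a n)`. -/
def ppow {M : Type v} [Mul M] (a : M) : ℕ → M
  | 0 => a
  | n + 1 => a * ppow a n

/-- Iterated left multiplication: `lpow a r g = a^{{r}} g`, i.e. `lpow a 0 g = g` and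
`lpow a (r+1) g = a * (lpow a r g)`. -/
def lpow {M : Type v} [Mul M] (a : M) : ℕ → M → M
  | 0, g => g
  | r + 1, g => a * lpow a r g

section Algebra

variable (K : Type v) [Field K]

/-- A commutative nonassociative monomial, viewed as an element of the free
commutative nonassociative algebra `K(T)` (realized as the magma algebra of the
free commutative magma). -/
noncomputable def mono (w : FreeCommMagma T) : MonoidAlgebra K (FreeCommMagma T) :=
  MonoidAlgebra.single w 1

/-- The augmentation (sum of the coefficients) of an element of the free
commutative nonassociative algebra. -/
noncomputable def aug : MonoidAlgebra K (FreeCommMagma T) →ₗ[K] K :=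
  Finsupp.lsum K (fun _ => LinearMap.id) ∘ₗ (MonoidAlgebra.coeffLinearEquiv K).toLinearMap

/-- The Peirce polynomial `∂ᵢ : K(T) → K[X]`, the `K`-linear map determined on
monomials by `∂ᵢ(tᵢ) = 1`, `∂ᵢ(tⱼ) = 0` for `j ≠ i`, and `∂ᵢ(u·v) = X·(∂ᵢ(u) + ∂ᵢ(v))`. -/
noncomputable def Dp [DecidableEq T] (i : T) :
    MonoidAlgebra K (FreeCommMagma T) →ₗ[K] Polynomial K :=
  (Finsupp.lsum K fun w => LinearMap.toSpanSingleton K (Polynomial K)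
    (FreeCommMagma.peirce K i w)) ∘ₗ (MonoidAlgebra.coeffLinearEquiv K).toLinearMap

/-- The free commutative nonassociative algebra is commutative. -/
lemma fca_mul_comm (f g : MonoidAlgebra K (FreeCommMagma T)) : f * g = g * f := by
  rw [MonoidAlgebra.mul_def, MonoidAlgebra.mul_def, Finsupp.sum_comm]
  refine Finsupp.sum_congr fun a _ => Finsupp.sum_congr fun c _ => ?_
  rw [FreeCommMagma.mul_comm, mul_comm (f.coeff c) (g.coeff a)]

end Algebra

section Subst

variable (K : Type v) [Field K] {A : Type*} [Mul A]

/-- Evaluation of a nonassociative word under a substitution of the variables. -/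
def evalAux (ρ : T → A) : FreeMagma T → A
  | .of t => ρ t
  | .mul u v => evalAux ρ u * evalAux ρ v

@[simp] lemma evalAux_mul (ρ : T → A) (u v : FreeMagma T) :
    evalAux ρ (u * v) = evalAux ρ u * evalAux ρ v := rfl

/-- Evaluation of a commutative nonassociative monomial in a commutative magma
under a substitution of the variables. -/
def FreeCommMagma.eval (hA : ∀ a b : A, a * b = b * a) (ρ : T → A) :
    FreeCommMagma T → A :=
  Quot.lift (evalAux ρ) (by
    intro a b h
    induction h with
    | comm a b => exact hA _ _
    | mul_left c h ih => simp [ih]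
    | mul_right c h ih => simp [ih])

/-- The substitution homomorphism `ρ̂ : K(T) → A` extending a substitution
`ρ : T → A` of the variables, for `A` a commutative nonassociative `K`-algebra. -/
noncomputable def subst [AddCommMonoid A] [Module K A]
    (hA : ∀ a b : A, a * b = b * a) (ρ : T → A)
    (f : MonoidAlgebra K (FreeCommMagma T)) : A :=
  f.coeff.sum fun w c => c • FreeCommMagma.eval hA ρ w

end Subst

/-- The list of the leaves of a nonassociative word (a rooted binary tree with
leaves labeled by the variables), together with their heights. -/
def leaves : FreeMagma T → List (T × ℕ)
  | .of t => [(t, 0)]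
  | .mul u v => (leaves u ++ leaves v).map fun p => (p.1, p.2 + 1)

end Evanescent

namespace PeirceProof

open Evanescent Polynomial

variable {K : Type*} [Field K]
variable {A : Type*} [NonUnitalNonAssocCommRing A] [Module K A]
  [SMulCommClass K A A] [IsScalarTower K A A]

/-- Convolution product of coefficient sequences. -/
noncomputable def pmul (g h : ℕ →₀ A) : ℕ →₀ A :=
  g.sum fun a b => h.sum fun c d => Finsupp.single (a + c) (b * d)

lemma pmul_apply (g h : ℕ →₀ A) (n : ℕ) :
    pmul g h n = g.sum fun a b => h.sum fun c d => if a + c = n then b * d else 0 := by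
  rw [pmul, Finsupp.sum_apply]
  refine Finsupp.sum_congr fun a _ => ?_
  rw [Finsupp.sum_apply]
  exact Finsupp.sum_congr fun c _ => Finsupp.single_apply

lemma sum_if_eq (g : ℕ →₀ A) (c : ℕ) (F : A → A) (hF : F 0 = 0) :
    (g.sum fun a b => if a = c then F b else 0) = F (g c) := by
  rw [Finsupp.sum_ite_eq' g c fun _ b => F b]
  by_cases h : c ∈ g.support
  · rw [if_pos h]
  · rw [if_neg h, Finsupp.notMem_support_iff.mp h, hF]

lemma pmul_coeff_zero (g h : ℕ →₀ A) : pmul g h 0 = g 0 * h 0 := by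
  rw [pmul_apply]
  have h1 : (g.sum fun a b => h.sum fun c d => if a + c = 0 then b * d else 0)
      = g.sum fun a b => if a = 0 then b * h 0 else 0 := by
    refine Finsupp.sum_congr fun a _ => ?_
    rcases eq_or_ne a 0 with rfl | ha
    · rw [if_pos rfl]
      simpa using sum_if_eq h 0 (fun d => g 0 * d) (mul_zero _)
    · rw [if_neg ha]
      rw [Finsupp.sum]
      exact Finset.sum_eq_zero fun c _ => if_neg (by omega)
  rw [h1]
  exact sum_if_eq g 0 (fun b => b * h 0) (zero_mul _)

lemma pmul_coeff_one (g h : ℕ →₀ A) : pmul g h 1 = g 0 * h 1 + g 1 * h 0 := by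
  rw [pmul_apply]
  have h1 : (g.sum fun a b => h.sum fun c d => if a + c = 1 then b * d else 0)
      = g.sum fun a b =>
          (if a = 0 then b * h 1 else 0) + (if a = 1 then b * h 0 else 0) := by
    refine Finsupp.sum_congr fun a _ => ?_
    match a with
    | 0 =>
      rw [if_pos rfl, if_neg (by omega), add_zero]
      simpa using sum_if_eq h 1 (fun d => g 0 * d) (mul_zero _)
    | 1 =>
      rw [if_neg (by omega), if_pos rfl, zero_add]
      have : (h.sum fun c d => if 1 + c = 1 then g 1 * d else 0)
          = h.sum fun c d => if c = 0 then g 1 * d else 0 :=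
        Finsupp.sum_congr fun c _ => by
          exact if_congr (by omega) rfl rfl
      rw [this]
      simpa using sum_if_eq h 0 (fun d => g 1 * d) (mul_zero _)
    | (n+2) =>
      rw [if_neg (by omega), if_neg (by omega), add_zero, Finsupp.sum]
      exact Finset.sum_eq_zero fun c _ => if_neg (by omega)
  rw [h1, Finsupp.sum_add]
  rw [sum_if_eq g 0 (fun b => b * h 1) (zero_mul _),
    sum_if_eq g 1 (fun b => b * h 0) (zero_mul _)]

lemma pmul_supp {g h : ℕ →₀ A} {n : ℕ} (hn : n ∈ (pmul g h).support) :
    ∃ a ∈ g.support, ∃ c ∈ h.support, n = a + c := by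
  rw [pmul] at hn
  have h1 := Finsupp.support_sum hn
  rw [Finset.mem_biUnion] at h1
  obtain ⟨a, ha, h2⟩ := h1
  have h3 := Finsupp.support_sum h2
  rw [Finset.mem_biUnion] at h3
  obtain ⟨c, hc, h4⟩ := h3
  have h5 := Finsupp.support_single_subset h4
  exact ⟨a, ha, c, hc, by simpa using h5⟩

lemma pmul_comm (g h : ℕ →₀ A) : pmul g h = pmul h g := by
  rw [pmul, pmul, Finsupp.sum_comm]
  exact Finsupp.sum_congr fun a _ => Finsupp.sum_congr fun c _ => by
    rw [add_comm, mul_comm]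

/-- Evaluation of the coefficient sequence of `λ ↦ ρ̂_λ` by a linear map. -/
noncomputable def phi (l : K) : (ℕ →₀ A) →ₗ[K] A :=
  Finsupp.lsum K fun k => (l ^ k) • (LinearMap.id : A →ₗ[K] A)

lemma phi_single (l : K) (k : ℕ) (a : A) :
    phi (A := A) l (Finsupp.single k a) = l ^ k • a := by
  simp [phi]

lemma phi_apply (l : K) (g : ℕ →₀ A) :
    phi (A := A) l g = g.sum fun k a => l ^ k • a := by
  simp [phi, Finsupp.lsum_apply, Finsupp.sum]

lemma phi_pmul (l : K) (g h : ℕ →₀ A) :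
    phi (A := A) l (pmul g h) = phi (A := A) l g * phi (A := A) l h := by
  rw [pmul, map_finsuppSum, phi_apply, phi_apply, Finsupp.sum_mul]
  refine Finsupp.sum_congr fun a _ => ?_
  rw [map_finsuppSum, Finsupp.mul_sum]
  refine Finsupp.sum_congr fun c _ => ?_
  rw [phi_single, pow_add, mul_smul, smul_mul_assoc, mul_smul_comm]

variable {T : Type*}

/-- Evaluation of a nonassociative word in coefficient sequences. -/
noncomputable def pEval (ρ : T → ℕ →₀ A) : FreeMagma T → (ℕ →₀ A)
  | .of t => ρ t
  | .mul u v => pmul (pEval ρ u) (pEval ρ v)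

@[simp] lemma pEval_mul (ρ : T → ℕ →₀ A) (u v : FreeMagma T) :
    pEval ρ (u * v) = pmul (pEval ρ u) (pEval ρ v) := rfl

@[simp] lemma pEval_of (ρ : T → ℕ →₀ A) (t : T) :
    pEval ρ (FreeMagma.of t) = ρ t := rfl

lemma pEval_respects (ρ : T → ℕ →₀ A) {a b : FreeMagma T} (h : CommRel T a b) :
    pEval ρ a = pEval ρ b := by
  induction h with
  | comm a b => exact pmul_comm _ _
  | mul_left c h ih => simp [ih]
  | mul_right c h ih => simp [ih]

/-- Evaluation of a commutative monomial in coefficient sequences. -/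
noncomputable def pEvalC (ρ : T → ℕ →₀ A) : FreeCommMagma T → (ℕ →₀ A) :=
  Quot.lift (pEval ρ) fun _ _ h => pEval_respects ρ h

lemma phi_pEval (l : K) (ρ : T → ℕ →₀ A) (w : FreeMagma T) :
    phi (A := A) l (pEval ρ w) = evalAux (fun t => phi (A := A) l (ρ t)) w := by
  induction w with
  | ih1 t => rfl
  | ih2 u v ihu ihv => rw [pEval_mul, evalAux_mul, phi_pmul, ihu, ihv]

variable [DecidableEq T]

/-- The generic substitution `t_j ↦ e + λ·δ_{ij} y`, as coefficient sequences. -/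
noncomputable def rhoB (i : T) (e y : A) : T → ℕ →₀ A := fun j =>
  if j = i then Finsupp.single 0 e + Finsupp.single 1 y else Finsupp.single 0 e

lemma pEval_coeff_zero (i : T) {e : A} (y : A) (hee : e * e = e) (w : FreeMagma T) :
    pEval (rhoB i e y) w 0 = e := by
  induction w with
  | ih1 t =>
    by_cases h : t = i <;>
      simp [rhoB, h, Finsupp.single_apply]
  | ih2 u v ihu ihv => rw [pEval_mul, pmul_coeff_zero, ihu, ihv, hee]

lemma pEval_coeff_one (i : T) {e : A} (y : A) (hee : e * e = e) (w : FreeMagma T) :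
    pEval (rhoB i e y) w 1 =
      Polynomial.aeval (LinearMap.mulLeft K e) (peirceAux K i w) y := by
  induction w with
  | ih1 t =>
    by_cases h : t = i <;>
      simp [rhoB, h, Finsupp.single_apply]
  | ih2 u v ihu ihv =>
    rw [pEval_mul, pmul_coeff_one, ihu, ihv, pEval_coeff_zero i y hee,
      pEval_coeff_zero i y hee, peirceAux_mul, map_mul, map_add, Polynomial.aeval_X,
      Module.End.mul_apply, LinearMap.add_apply, LinearMap.mulLeft_apply, mul_add,
      mul_comm _ e, add_comm]

lemma pEval_supp (i : T) (e y : A) (w : FreeMagma T) :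
    ∀ n ∈ (pEval (rhoB i e y) w).support, n ≤ countAux i w := by
  induction w with
  | ih1 t =>
    intro n hn
    by_cases h : t = i
    · subst h
      simp only [pEval_of, rhoB, if_pos rfl] at hn
      have h1 := Finsupp.support_add hn
      rw [Finset.mem_union] at h1
      have : n = 0 ∨ n = 1 := by
        rcases h1 with h1 | h1
        · exact Or.inl (by simpa using Finsupp.support_single_subset h1)
        · exact Or.inr (by simpa using Finsupp.support_single_subset h1)
      rcases this with rfl | rfl <;> simp [countAux]
    · simp only [pEval_of, rhoB, if_neg h] at hn
      have h1 : n = 0 := by simpa using Finsupp.support_single_subset hn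
      simp only [countAux, if_neg h]
      omega
  | ih2 u v ihu ihv =>
    intro n hn
    rw [pEval_mul] at hn
    obtain ⟨a, ha, c, hc, rfl⟩ := pmul_supp hn
    rw [countAux_mul]
    exact Nat.add_le_add (ihu a ha) (ihv c hc)

end PeirceProof

open Evanescent in
/-- If a weighted `K`-algebra with an idempotent `e` of weight `1`
satisfies the identity `f`, and `K∖{0}` has more elements than the degree of `f` in each
variable, then every Peirce polynomial `∂ᵢ f` annihilates `L_e` on `ker ω`. -/
theorem peirce_polynomial_annihilates
    {K : Type u} [Field K] (hchar : (2 : K) ≠ 0)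
    {T : Type v} [DecidableEq T]
    {A : Type w} [NonUnitalNonAssocCommRing A] [Module K A]
    [SMulCommClass K A A] [IsScalarTower K A A]
    (ω : A →ₙₐ[K] K) (hω : ω ≠ 0)
    (e : A) (hee : e * e = e) (hene : e ≠ 0) (hωe : ω e = 1)
    (f : MonoidAlgebra K (FreeCommMagma T))
    (hcard : ∀ i : T,
      ((f.coeff.support.sup fun w => FreeCommMagma.count i w : ℕ) : Cardinal)
        < Cardinal.mk {x : K // x ≠ 0})
    (hf : ∀ ρ : T → A, (∀ t, ω (ρ t) = 1) →
      subst K (fun a b => mul_comm a b) ρ f = 0)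
    (i : T) (y : A) (hy : ω y = 0) :
    Polynomial.aeval (LinearMap.mulLeft K e) (Dp K i f) y = 0 := by
  classical
  open PeirceProof in
  set F : ℕ →₀ A := f.coeff.sum (fun w c => c • pEvalC (rhoB i e y) w) with hFdef
  set d : ℕ := f.coeff.support.sup fun w => FreeCommMagma.count i w with hd
  -- Step A: the coefficient sequence `F` is "evanescent": `phi l F = 0` for all `l`.
  have hvan : ∀ l : K, phi (A := A) l F = 0 := by
    intro l
    have hrho : ∀ t : T, ω (phi (A := A) l (rhoB i e y t)) = 1 := by
      intro t
      by_cases h : t = i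
      · simp [rhoB, h, phi_single, hωe, hy]
      · simp [rhoB, h, phi_single, hωe]
    have h1 : phi (A := A) l F =
        subst K (fun a b => mul_comm a b)
          (fun t => phi (A := A) l (rhoB i e y t)) f := by
      rw [hFdef, map_finsuppSum, subst]
      refine Finsupp.sum_congr fun w _ => ?_
      rw [map_smul]
      congr 1
      induction w using Quot.ind with
      | _ w => exact phi_pEval l _ w
    rw [h1]
    exact hf _ hrho
  -- Step B: `F` vanishes in degrees above `d`.
  have hFdeg : ∀ n : ℕ, d < n → F n = 0 := by
    intro n hn
    rw [hFdef, Finsupp.sum_apply, Finsupp.sum]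
    refine Finset.sum_eq_zero fun w hw => ?_
    rw [Finsupp.smul_apply]
    have hz : pEvalC (rhoB i e y) w n = 0 := by
      revert hw
      induction w using Quot.ind with
      | _ w =>
        intro hw
        by_contra hnz
        have hmem : n ∈ (pEval (rhoB i e y) w).support :=
          Finsupp.mem_support_iff.mpr hnz
        have h2 := pEval_supp i e y w n hmem
        have h3 : FreeCommMagma.count i (Quot.mk _ w) ≤ d := Finset.le_sup hw
        have h4 : FreeCommMagma.count i (Quot.mk _ w) = countAux i w := rfl
        omega
    rw [hz, smul_zero]
  -- Step C: every linear functional kills `F 1`.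
  have hdual : ∀ φ : Module.Dual K A, φ (F 1) = 0 := by
    intro φ
    set p : Polynomial K := ⟨⟨F.mapRange φ (map_zero φ)⟩⟩ with hp
    have hcoeff : ∀ n, p.coeff n = φ (F n) := by
      intro n
      rw [hp, Polynomial.coeff_ofFinsupp]; exact Finsupp.mapRange_apply (hf := map_zero φ)
    have hsupp : p.support = (F.mapRange φ (map_zero φ)).support := by
      rw [hp, Polynomial.support_ofFinsupp]
    have heval : ∀ l : K, p.eval l = 0 := by
      intro l
      have h2 : p.eval l = φ (phi (A := A) l F) := by
        calc p.eval l
            = ∑ n ∈ (F.mapRange φ (map_zero φ)).support, φ (F n) * l ^ n := by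
              rw [Polynomial.eval_eq_sum, Polynomial.sum_def, hsupp]
              exact Finset.sum_congr rfl fun n _ => by rw [hcoeff]
          _ = ∑ n ∈ F.support, φ (F n) * l ^ n := by
              refine Finset.sum_subset Finsupp.support_mapRange fun x hx hnx => ?_
              have h5 := Finsupp.notMem_support_iff.mp hnx
              rw [Finsupp.mapRange_apply] at h5
              rw [h5, zero_mul]
          _ = φ (phi (A := A) l F) := by
              rw [phi_apply, map_finsuppSum, Finsupp.sum]
              exact Finset.sum_congr rfl fun k _ => by
                rw [map_smul, smul_eq_mul, mul_comm]
      rw [h2, hvan, map_zero]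
    have hdeg : p.natDegree ≤ d :=
      Polynomial.natDegree_le_iff_coeff_eq_zero.mpr fun m hm => by
        rw [hcoeff, hFdeg m hm, map_zero]
    have hp0 : p = 0 := by
      cases finite_or_infinite K with
      | inl hfin =>
        haveI : Fintype {x : K // x ≠ 0} := Fintype.ofFinite _
        have hcard' := hcard i
        rw [Cardinal.mk_fintype] at hcard'
        have hlt : d < Fintype.card {x : K // x ≠ 0} := by exact_mod_cast hcard'
        exact Polynomial.eq_zero_of_natDegree_lt_card_of_eval_eq_zero p
          Subtype.val_injective (fun x => heval x) (lt_of_le_of_lt hdeg hlt)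
      | inr hinf => exact Polynomial.zero_of_eval_zero p heval
    rw [← hcoeff 1, hp0, Polynomial.coeff_zero]
  have hF1 : F 1 = 0 := (Module.forall_dual_apply_eq_zero_iff K (F 1)).mp hdual
  -- Step D: identify the goal with `F 1`.
  have hgoal : Polynomial.aeval (LinearMap.mulLeft K e) (Dp K i f) y = F 1 := by
    have hDp : Dp K i f = f.coeff.sum fun w c => c • FreeCommMagma.peirce K i w := rfl
    rw [hFdef, Finsupp.sum_apply, hDp]
    rw [map_finsuppSum (Polynomial.aeval (LinearMap.mulLeft K e))]
    rw [Finsupp.sum, Finsupp.sum, LinearMap.coe_sum, Finset.sum_apply]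
    refine Finset.sum_congr rfl fun w _ => ?_
    rw [Finsupp.smul_apply, map_smul, LinearMap.smul_apply]
    congr 1
    induction w using Quot.ind with
    | _ w => exact (pEval_coeff_one i y hee w).symm
  rw [hgoal, hF1]
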